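/- (Theorem 3.2, partition function) Set U_{ij} = Σ_{m∈ℕ} λ̄_i(m;j)/μ̄_i(m;j) for i ≠ j and L_j = Σ_{m∈ℕ} λ̄_j(m;j)·γ̄_j(m)/μ̄_j(m;j). If U_{ij} < ∞ for all i ≠ j and L_j < ∞ for all j (sub-criticality), then the family of weights w(j,n) = ∏_{q∈Λ} [λ̄_q(n_q;j)/μ̄_q(n_q;j)] · γ̄_j(n_j), indexed by j ∈ Λ and n : Λ → ℕ, is summable and Σ_{j∈Λ} Σ_{n : Λ → ℕ} w(j,n) = Σ_{j∈Λ} L_j · ∏_{i∈Λ, i≠j} U_{ij}; consequently π(j,n) = w(j,n)/Ξ_Λ with Ξ_Λ = Σ_{j∈Λ} L_j ∏_{i≠j} U_{ij} is a probability distribution on Λ × ℕ^Λ. -/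

import Mathlib

lemma hasSum_pi_prod_fin : ∀ (k : ℕ) (f : Fin k → ℕ → ℝ) (T : Fin k → ℝ),
    (∀ i m, 0 ≤ f i m) → (∀ i, HasSum (f i) (T i)) →
    HasSum (fun n : Fin k → ℕ => ∏ i, f i (n i)) (∏ i, T i) := by
  intro k
  induction k with
  | zero =>
    intro f T _ _
    simp only [Finset.univ_eq_empty, Finset.prod_empty]
    exact hasSum_single (α := ℝ) (default : Fin 0 → ℕ)
      (fun b hb => absurd (Subsingleton.elim b default) hb)
  | succ k ih =>
    intro f T h0 hT
    have hprev := ih (fun i => f i.succ) (fun i => T i.succ)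
      (fun i m => h0 i.succ m) (fun i => hT i.succ)
    have hsum2 : Summable (fun p : ℕ × (Fin k → ℕ) => f 0 p.1 * ∏ i, f i.succ (p.2 i)) := by
      apply Summable.mul_of_nonneg (hT 0).summable hprev.summable
      · exact fun m => h0 0 m
      · exact fun n => Finset.prod_nonneg fun i _ => h0 i.succ (n i)
    have hmul := (hT 0).mul hprev hsum2
    have hfe : ((fun n : Fin (k+1) → ℕ => ∏ i, f i (n i)) ∘ (Fin.consEquiv (fun _ : Fin (k+1) => ℕ)))
        = fun p : ℕ × (Fin k → ℕ) => f 0 p.1 * ∏ i, f i.succ (p.2 i) := by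
      funext p
      simp [Fin.prod_univ_succ]
    rw [Fin.prod_univ_succ]
    exact (Equiv.hasSum_iff (Fin.consEquiv (fun _ : Fin (k+1) => ℕ))).mp (hfe ▸ hmul)

lemma hasSum_pi_prod {ι : Type*} [Fintype ι] (f : ι → ℕ → ℝ) (T : ι → ℝ)
    (h0 : ∀ i m, 0 ≤ f i m) (hT : ∀ i, HasSum (f i) (T i)) :
    HasSum (fun n : ι → ℕ => ∏ i, f i (n i)) (∏ i, T i) := by
  classical
  obtain ⟨e⟩ : Nonempty (ι ≃ Fin (Fintype.card ι)) := ⟨Fintype.equivFin ι⟩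
  have hfin := hasSum_pi_prod_fin (Fintype.card ι) (fun i => f (e.symm i))
    (fun i => T (e.symm i)) (fun i m => h0 _ m) (fun i => hT _)
  have heq : (∏ i, T (e.symm i)) = ∏ i, T i := Fintype.prod_equiv e.symm _ _ (fun _ => rfl)
  rw [heq] at hfin
  let E : (ι → ℕ) ≃ (Fin (Fintype.card ι) → ℕ) := Equiv.arrowCongr e (Equiv.refl ℕ)
  have hfe : ((fun n : ι → ℕ => ∏ i, f i (n i)) ∘ E.symm)
      = fun m : Fin (Fintype.card ι) → ℕ => ∏ i, f (e.symm i) (m i) := by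
    funext m
    exact Fintype.prod_equiv e _ _ (fun i => by simp [E, Equiv.arrowCongr])
  exact (Equiv.hasSum_iff E.symm).mp (hfe ▸ hfin)

/-- Theorem 3.2, partition function: under sub-criticality
(`U_{ij} < ∞` for `i ≠ j` and `L_j < ∞`), the weights `w(j,n)` are summable with
total sum `Ξ_Λ = Σ_j L_j ∏_{i≠j} U_{ij}`, and `π = w/Ξ_Λ` is a probability
distribution on `Λ × ℕ^Λ`. -/
theorem general_rw_jackson_partition_function
    (Λ : Type*) [Fintype Λ] [DecidableEq Λ] [Nonempty Λ]
    (lam mu : Λ → ℕ → Λ → ℝ) (gam : Λ → ℕ → ℝ)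
    (hlam : ∀ i m j, 0 ≤ lam i m j) (hmu : ∀ i m j, 0 < mu i m j)
    (hgam : ∀ i m, 0 < gam i m) (hgam0 : ∀ i, gam i 0 = 1)
    (lamBar muBar : Λ → ℕ → Λ → ℝ) (gamBar : Λ → ℕ → ℝ)
    (hlamBar : ∀ i m j, lamBar i m j = ∏ u ∈ Finset.range m, lam i u j)
    (hmuBar : ∀ i m j, muBar i m j = ∏ u ∈ Finset.range m, mu i (u + 1) j)
    (hgamBar : ∀ i m, gamBar i m = ∏ u ∈ Finset.range m, gam i u)
    -- sub-criticality: U_{ij} < ∞ for i ≠ j and L_j < ∞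
    (hU : ∀ i j : Λ, i ≠ j → Summable (fun m : ℕ => lamBar i m j / muBar i m j))
    (hL : ∀ j : Λ, Summable (fun m : ℕ => lamBar j m j * gamBar j m / muBar j m j))
    (U : Λ → Λ → ℝ) (L : Λ → ℝ)
    (hUdef : ∀ i j, U i j = ∑' m : ℕ, lamBar i m j / muBar i m j)
    (hLdef : ∀ j, L j = ∑' m : ℕ, lamBar j m j * gamBar j m / muBar j m j)
    (w : Λ → (Λ → ℕ) → ℝ)
    (hw : ∀ (j : Λ) (n : Λ → ℕ),
      w j n = (∏ q, lamBar q (n q) j / muBar q (n q) j) * gamBar j (n j)) :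
    Summable (fun p : Λ × (Λ → ℕ) => w p.1 p.2) ∧
    (∑' p : Λ × (Λ → ℕ), w p.1 p.2 =
      ∑ j, L j * ∏ i ∈ Finset.univ.erase j, U i j) ∧
    (∑' p : Λ × (Λ → ℕ),
        w p.1 p.2 / (∑ j, L j * ∏ i ∈ Finset.univ.erase j, U i j) = 1) := by
  classical
  -- basic positivity facts
  have hlamBar_nn : ∀ i m j, 0 ≤ lamBar i m j := fun i m j => by
    rw [hlamBar]; exact Finset.prod_nonneg fun u _ => hlam i u j
  have hmuBar_pos : ∀ i m j, 0 < muBar i m j := fun i m j => by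
    rw [hmuBar]; exact Finset.prod_pos fun u _ => hmu i (u + 1) j
  have hgamBar_pos : ∀ i m, 0 < gamBar i m := fun i m => by
    rw [hgamBar]; exact Finset.prod_pos fun u _ => hgam i u
  have hL_nn_term : ∀ j m, 0 ≤ lamBar j m j * gamBar j m / muBar j m j := fun j m =>
    div_nonneg (mul_nonneg (hlamBar_nn j m j) (hgamBar_pos j m).le) (hmuBar_pos j m j).le
  have hU_nn_term : ∀ i m j, 0 ≤ lamBar i m j / muBar i m j := fun i m j =>
    div_nonneg (hlamBar_nn i m j) (hmuBar_pos i m j).le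
  -- factor functions for a fixed j
  set F : Λ → Λ → ℕ → ℝ := fun j q m =>
    if q = j then lamBar j m j * gamBar j m / muBar j m j else lamBar q m j / muBar q m j
    with hF
  set S : Λ → Λ → ℝ := fun j q => if q = j then L j else U q j with hS
  have hF_nn : ∀ j q m, 0 ≤ F j q m := by
    intro j q m
    simp only [hF]
    split
    · exact hL_nn_term j m
    · exact hU_nn_term q m j
  have hFhas : ∀ j q, HasSum (F j q) (S j q) := by
    intro j q
    by_cases h : q = j
    · subst h
      simp only [hF, hS, if_pos rfl, hLdef]
      exact (hL q).hasSum
    · simp only [hF, hS, if_neg h, hUdef]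
      exact (hU q j h).hasSum
  have hHS : ∀ j : Λ, HasSum (w j) (L j * ∏ i ∈ Finset.univ.erase j, U i j) := by
    intro j
    have h1 := hasSum_pi_prod (F j) (S j) (hF_nn j) (hFhas j)
    have h2 : (fun n : Λ → ℕ => ∏ q, F j q (n q)) = w j := by
      funext n
      rw [hw, ← Finset.mul_prod_erase Finset.univ (fun q => F j q (n q)) (Finset.mem_univ j),
        ← Finset.mul_prod_erase Finset.univ
          (fun q => lamBar q (n q) j / muBar q (n q) j) (Finset.mem_univ j)]
      have h3 : ∏ q ∈ Finset.univ.erase j, F j q (n q)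
          = ∏ q ∈ Finset.univ.erase j, lamBar q (n q) j / muBar q (n q) j :=
        Finset.prod_congr rfl fun q hq => by
          simp only [hF, if_neg (Finset.mem_erase.mp hq).1]
      rw [h3]
      simp only [hF, if_pos rfl]
      ring
    have h4 : (∏ q, S j q) = L j * ∏ i ∈ Finset.univ.erase j, U i j := by
      rw [← Finset.mul_prod_erase Finset.univ (S j) (Finset.mem_univ j)]
      simp only [hS, if_pos rfl]
      congr 1
      exact Finset.prod_congr rfl fun q hq => by
        simp only [if_neg (Finset.mem_erase.mp hq).1]
    rw [h2, h4] at h1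
    exact h1
  have hw_nn : ∀ j n, 0 ≤ w j n := by
    intro j n
    rw [hw]
    exact mul_nonneg (Finset.prod_nonneg fun q _ => hU_nn_term q (n q) j)
      (hgamBar_pos j (n j)).le
  -- summability
  have hsumm : Summable (fun p : Λ × (Λ → ℕ) => w p.1 p.2) := by
    refine (summable_prod_of_nonneg fun p => hw_nn p.1 p.2).mpr
      ⟨fun j => (hHS j).summable, Summable.of_finite⟩
  refine ⟨hsumm, ?_, ?_⟩
  · rw [Summable.tsum_prod' hsumm (fun j => (hHS j).summable), tsum_fintype]
    exact Finset.sum_congr rfl fun j _ => (hHS j).tsum_eq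
  · -- positivity of the partition function
    have hL_ge : ∀ j, (1 : ℝ) ≤ L j := by
      intro j
      have h0 : lamBar j 0 j * gamBar j 0 / muBar j 0 j = 1 := by
        rw [hlamBar, hmuBar, hgamBar]; simp
      rw [hLdef]
      calc (1 : ℝ) = lamBar j 0 j * gamBar j 0 / muBar j 0 j := h0.symm
        _ ≤ _ := Summable.le_tsum (hL j) 0 fun m _ => hL_nn_term j m
    have hU_ge : ∀ i j, i ≠ j → (1 : ℝ) ≤ U i j := by
      intro i j hij
      have h0 : lamBar i 0 j / muBar i 0 j = 1 := by
        rw [hlamBar, hmuBar]; simp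
      rw [hUdef]
      calc (1 : ℝ) = lamBar i 0 j / muBar i 0 j := h0.symm
        _ ≤ _ := Summable.le_tsum (hU i j hij) 0 fun m _ => hU_nn_term i m j
    have hXi_pos : 0 < ∑ j, L j * ∏ i ∈ Finset.univ.erase j, U i j := by
      apply Finset.sum_pos
      · intro j _
        exact mul_pos (lt_of_lt_of_le one_pos (hL_ge j))
          (Finset.prod_pos fun i hi =>
            lt_of_lt_of_le one_pos (hU_ge i j (Finset.mem_erase.mp hi).1))
      · exact Finset.univ_nonempty
    rw [tsum_div_const]
    rw [Summable.tsum_prod' hsumm (fun j => (hHS j).summable), tsum_fintype]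
    rw [Finset.sum_congr rfl fun j _ => (hHS j).tsum_eq]
    exact div_self (ne_of_gt hXi_pos)
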